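/- arXiv:2104.00229 — 2 statements merged into one kernel-verified Lean document; each statement's English description precedes it below -/
import Mathlib

section
/- Discrete Gronwall lemma: Let a_k, b_k, c_k, d_k, γ_k, Δt_k be nonnegative real numbers (indexed by k = 0,...,m+1) satisfying a_{k+1} - a_k + b_{k+1}Δt_{k+1} + c_{k+1}Δt_{k+1} - c_k Δt_k ≤ a_k d_k Δt_k + γ_{k+1} Δt_{k+1} for all 0 ≤ k ≤ m. Then a_{m+1} + Σ_{k=0}^{m+1} b_k Δt_k ≤ exp(Σ_{k=0}^{m} d_k Δt_k) · (a_0 + (b_0 + c_0)Δt_0 + Σ_{k=1}^{m+1} γ_k Δt_k). -/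
open Finset

namespace DiscreteGronwallPaper

theorem discrete_gronwall (m : ℕ) (a b c d γ Δt : ℕ → ℝ)
    (ha : ∀ k, 0 ≤ a k) (hb : ∀ k, 0 ≤ b k) (hc : ∀ k, 0 ≤ c k)
    (hd : ∀ k, 0 ≤ d k) (hγ : ∀ k, 0 ≤ γ k) (hΔt : ∀ k, 0 ≤ Δt k)
    (h : ∀ k ≤ m,
      a (k+1) - a k + b (k+1) * Δt (k+1) + c (k+1) * Δt (k+1) - c k * Δt k ≤
        a k * d k * Δt k + γ (k+1) * Δt (k+1)) :
    a (m+1) + ∑ k ∈ range (m+2), b k * Δt k ≤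
      Real.exp (∑ k ∈ range (m+1), d k * Δt k) *
        (a 0 + (b 0 + c 0) * Δt 0 + ∑ k ∈ Icc 1 (m+1), γ k * Δt k) := by
  have key : ∀ n, n ≤ m + 1 →
      a n + c n * Δt n + ∑ k ∈ range (n+1), b k * Δt k ≤
        Real.exp (∑ k ∈ range n, d k * Δt k) *
          (a 0 + (b 0 + c 0) * Δt 0 + ∑ k ∈ Icc 1 n, γ k * Δt k) := by
    intro n
    induction n with
    | zero =>
      intro _
      simp only [range_zero, sum_empty, Real.exp_zero, one_mul, range_one, sum_range_succ]
      simp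
      nlinarith [hc 0, hΔt 0, hb 0]
    | succ n ih =>
      intro hn
      have ih' := ih (by omega)
      have hh := h n (by omega)
      have hSb : (0:ℝ) ≤ ∑ k ∈ range (n+1), b k * Δt k :=
        Finset.sum_nonneg fun k _ => mul_nonneg (hb k) (hΔt k)
      have hD : (0:ℝ) ≤ d n * Δt n := mul_nonneg (hd n) (hΔt n)
      have hX : (0:ℝ) ≤ ∑ k ∈ range n, d k * Δt k :=
        Finset.sum_nonneg fun k _ => mul_nonneg (hd k) (hΔt k)
      have hexpD : 1 + d n * Δt n ≤ Real.exp (d n * Δt n) := by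
        have := Real.add_one_le_exp (d n * Δt n); linarith
      have hexpX : (1:ℝ) ≤ Real.exp (∑ k ∈ range n, d k * Δt k) := Real.one_le_exp hX
      have hexpDpos : (0:ℝ) < Real.exp (d n * Δt n) := Real.exp_pos _
      have hγ' : (0:ℝ) ≤ γ (n+1) * Δt (n+1) := mul_nonneg (hγ _) (hΔt _)
      have hR : (0:ℝ) ≤ a 0 + (b 0 + c 0) * Δt 0 + ∑ k ∈ Icc 1 n, γ k * Δt k := by
        have : (0:ℝ) ≤ ∑ k ∈ Icc 1 n, γ k * Δt k :=
          Finset.sum_nonneg fun k _ => mul_nonneg (hγ k) (hΔt k)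
        nlinarith [ha 0, hb 0, hc 0, hΔt 0]
      have hstep : a (n+1) + c (n+1) * Δt (n+1) + ∑ k ∈ range (n+2), b k * Δt k ≤
          (1 + d n * Δt n) * (a n + c n * Δt n + ∑ k ∈ range (n+1), b k * Δt k)
            + γ (n+1) * Δt (n+1) := by
        rw [sum_range_succ]
        nlinarith [ha n, hc n, hΔt n, mul_nonneg hD hSb,
          mul_nonneg hD (mul_nonneg (hc n) (hΔt n)), mul_nonneg hD (ha n)]
      have hIc : ∑ k ∈ Icc 1 (n+1), γ k * Δt k =
          (∑ k ∈ Icc 1 n, γ k * Δt k) + γ (n+1) * Δt (n+1) :=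
        Finset.sum_Icc_succ_top (by omega) _
      rw [show (∑ k ∈ range (n+1), d k * Δt k) = (∑ k ∈ range n, d k * Δt k) + d n * Δt n from
          sum_range_succ _ _, Real.exp_add, hIc]
      have h1 : (1 + d n * Δt n) * (a n + c n * Δt n + ∑ k ∈ range (n+1), b k * Δt k)
          ≤ Real.exp (d n * Δt n) * (Real.exp (∑ k ∈ range n, d k * Δt k) *
              (a 0 + (b 0 + c 0) * Δt 0 + ∑ k ∈ Icc 1 n, γ k * Δt k)) := by
        have hLHSnn : (0:ℝ) ≤ a n + c n * Δt n + ∑ k ∈ range (n+1), b k * Δt k := by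
          have := ha n; have := mul_nonneg (hc n) (hΔt n); linarith
        calc (1 + d n * Δt n) * (a n + c n * Δt n + ∑ k ∈ range (n+1), b k * Δt k)
            ≤ Real.exp (d n * Δt n) * (a n + c n * Δt n + ∑ k ∈ range (n+1), b k * Δt k) :=
              mul_le_mul_of_nonneg_right hexpD hLHSnn
          _ ≤ _ := mul_le_mul_of_nonneg_left ih' (le_of_lt hexpDpos)
      have hγbound : γ (n+1) * Δt (n+1) ≤
          Real.exp (∑ k ∈ range n, d k * Δt k) * Real.exp (d n * Δt n) *
            (γ (n+1) * Δt (n+1)) := by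
        nlinarith [mul_le_mul hexpX (Real.one_le_exp hD) zero_le_one (Real.exp_nonneg _), hγ']
      calc a (n+1) + c (n+1) * Δt (n+1) + ∑ k ∈ range (n+2), b k * Δt k
          ≤ (1 + d n * Δt n) * (a n + c n * Δt n + ∑ k ∈ range (n+1), b k * Δt k)
            + γ (n+1) * Δt (n+1) := hstep
        _ ≤ Real.exp (∑ k ∈ range n, d k * Δt k) * Real.exp (d n * Δt n) *
              ((a 0 + (b 0 + c 0) * Δt 0 + ∑ k ∈ Icc 1 n, γ k * Δt k)
                + γ (n+1) * Δt (n+1)) := by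
            nlinarith [h1, hγbound]
        _ = _ := by ring
  have := key (m+1) le_rfl
  have : a (m+1) + ∑ k ∈ range (m+2), b k * Δt k ≤
      a (m+1) + c (m+1) * Δt (m+1) + ∑ k ∈ range (m+2), b k * Δt k := by
    have := mul_nonneg (hc (m+1)) (hΔt (m+1)); linarith
  linarith [key (m+1) le_rfl]

end DiscreteGronwallPaper
end

section
/- Abstract BDF2 SAV energy stability: Let H be a real inner product space, α, ν, η, T, Δt > 0. Suppose u^{n+1}, u^n, u^{n-1}, b^{n+1}, b^n, b^{n-1} ∈ H, q^{n+1}, q^n, q^{n-1} ∈ ℝ, real numbers A, B, C, e > 0, and nonnegative reals Du, Db satisfy: (1/(2Δt))⟨3u^{n+1} - 4u^n + u^{n-1}, u^{n+1}⟩ + νDu² = e·q^{n+1}(αB - A), (α/(2Δt))⟨3b^{n+1} - 4b^n + b^{n-1}, b^{n+1}⟩ + αηDb² = -αe·q^{n+1}C, and (3q^{n+1} - 4q^n + q^{n-1})/(2Δt) = -(1/T)q^{n+1} + e(αC - αB + A). Then E^{n+1} - E^n ≤ -Δt(νDu² + ηαDb² + (1/T)|q^{n+1}|²), where E^n = (1/4)(‖u^n‖²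 + α‖b^n‖² + |q^n|²) + (1/4)(‖2u^n - u^{n-1}‖² + α‖2b^n - b^{n-1}‖² + |2q^n - q^{n-1}|²) and E^{n+1} is defined analogously with indices shifted up by one. -/
lemma bdf2_identity {H : Type*} [NormedAddCommGroup H] [InnerProductSpace ℝ H]
    (a b c : H) :
    2 * (inner ℝ ((3:ℝ) • a - (4:ℝ) • b + c) a : ℝ) =
      ‖a‖^2 + ‖(2:ℝ) • a - b‖^2 - ‖b‖^2 - ‖(2:ℝ) • b - c‖^2 + ‖a - (2:ℝ) • b + c‖^2 := by
  have h : ∀ x : H, ‖x‖^2 = (inner ℝ x x : ℝ) := fun x => (real_inner_self_eq_norm_sq x).symm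
  rw [h, h, h, h, h]
  simp only [inner_sub_left, inner_sub_right, inner_add_left, inner_add_right,
    inner_smul_left, inner_smul_right, conj_trivial]
  rw [real_inner_comm b a, real_inner_comm c a, real_inner_comm c b]
  ring

theorem sav_bdf2_energy_stability
    {H : Type*} [NormedAddCommGroup H] [InnerProductSpace ℝ H]
    (α ν η T Δt e : ℝ) (hα : 0 < α) (hν : 0 < ν) (hη : 0 < η) (hT : 0 < T)
    (hΔt : 0 < Δt) (he : 0 < e)
    (u2 u1 u0 b2 b1 b0 : H) (q2 q1 q0 : ℝ) (A B C Du Db : ℝ)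
    (hDu : 0 ≤ Du) (hDb : 0 ≤ Db)
    (hu : (1/(2*Δt)) * (inner ℝ ((3:ℝ) • u2 - (4:ℝ) • u1 + u0) u2 : ℝ) + ν * Du^2 =
      e * q2 * (α * B - A))
    (hb : (α/(2*Δt)) * (inner ℝ ((3:ℝ) • b2 - (4:ℝ) • b1 + b0) b2 : ℝ) + α * η * Db^2 =
      -(α * e * q2 * C))
    (hq : (3*q2 - 4*q1 + q0)/(2*Δt) = -(1/T) * q2 + e * (α * C - α * B + A)) :
    ((1:ℝ)/4 * (‖u2‖^2 + α * ‖b2‖^2 + |q2|^2) +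
      (1:ℝ)/4 * (‖(2:ℝ) • u2 - u1‖^2 + α * ‖(2:ℝ) • b2 - b1‖^2 + |2*q2 - q1|^2)) -
    ((1:ℝ)/4 * (‖u1‖^2 + α * ‖b1‖^2 + |q1|^2) +
      (1:ℝ)/4 * (‖(2:ℝ) • u1 - u0‖^2 + α * ‖(2:ℝ) • b1 - b0‖^2 + |2*q1 - q0|^2)) ≤
    -(Δt * (ν * Du^2 + η * α * Db^2 + (1/T) * |q2|^2)) := by
  have hΔt' : (2*Δt) ≠ 0 := by positivity
  have hIu := bdf2_identity u2 u1 u0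
  have hIb := bdf2_identity b2 b1 b0
  -- clear denominators in hypotheses
  have hu' : (inner ℝ ((3:ℝ) • u2 - (4:ℝ) • u1 + u0) u2 : ℝ) =
      (2*Δt) * (e * q2 * (α * B - A) - ν * Du^2) := by
    field_simp at hu; linarith
  have hb' : α * (inner ℝ ((3:ℝ) • b2 - (4:ℝ) • b1 + b0) b2 : ℝ) =
      (2*Δt) * (-(α * e * q2 * C) - α * η * Db^2) := by
    field_simp at hb; linear_combination α * hb
  have hq' : (3*q2 - 4*q1 + q0) = (2*Δt) * (-(1/T) * q2 + e * (α * C - α * B + A)) := by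
    field_simp at hq ⊢; linarith
  have habs2 : |q2|^2 = q2^2 := sq_abs q2
  have habsa : |2*q2 - q1|^2 = (2*q2 - q1)^2 := sq_abs _
  have habsb : |2*q1 - q0|^2 = (2*q1 - q0)^2 := sq_abs _
  have habs1 : |q1|^2 = q1^2 := sq_abs q1
  have hqid : 2 * ((3*q2 - 4*q1 + q0) * q2) =
      q2^2 + (2*q2 - q1)^2 - q1^2 - (2*q1 - q0)^2 + (q2 - 2*q1 + q0)^2 := by ring
  have hr1 : (0:ℝ) ≤ ‖u2 - (2:ℝ) • u1 + u0‖^2 := by positivity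
  have hr2 : (0:ℝ) ≤ ‖b2 - (2:ℝ) • b1 + b0‖^2 := by positivity
  have hr3 : (0:ℝ) ≤ (q2 - 2*q1 + q0)^2 := by positivity
  rw [habs2, habsa, habsb, habs1]
  have hIbα : α * (2 * (inner ℝ ((3:ℝ) • b2 - (4:ℝ) • b1 + b0) b2 : ℝ)) =
      α * (‖b2‖^2 + ‖(2:ℝ) • b2 - b1‖^2 - ‖b1‖^2 - ‖(2:ℝ) • b1 - b0‖^2 + ‖b2 - (2:ℝ) • b1 + b0‖^2) := by
    rw [hIb]
  have hq2 : (3*q2 - 4*q1 + q0) * q2 = (2*Δt) * (-(1/T) * q2 + e * (α * C - α * B + A)) * q2 := by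
    rw [hq']
  have hkey : ((1:ℝ)/4 * (‖u2‖^2 + α * ‖b2‖^2 + q2^2) +
      (1:ℝ)/4 * (‖(2:ℝ) • u2 - u1‖^2 + α * ‖(2:ℝ) • b2 - b1‖^2 + (2*q2 - q1)^2)) -
    ((1:ℝ)/4 * (‖u1‖^2 + α * ‖b1‖^2 + q1^2) +
      (1:ℝ)/4 * (‖(2:ℝ) • u1 - u0‖^2 + α * ‖(2:ℝ) • b1 - b0‖^2 + (2*q1 - q0)^2)) =
    -(Δt * (ν * Du^2 + η * α * Db^2 + (1/T) * q2^2)) -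
      (1/4) * (‖u2 - (2:ℝ) • u1 + u0‖^2 + α * ‖b2 - (2:ℝ) • b1 + b0‖^2 + (q2 - 2*q1 + q0)^2) := by
    linear_combination (-(1:ℝ)/4) * hIu - (α/4) * hIb + (1/2) * hu' + (1/2) * hb' + (1/2) * hq2
  linarith [hr1, hr3, mul_nonneg hα.le hr2]
end
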